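/- arXiv:1601.00385 — 2 statements merged into one kernel-verified Lean document; each statement's English description precedes it below -/
import Mathlib

section
/- Row insertion is invertible: if T is a semistandard Young tableau of shape ρ and x a positive integer, then applying reverse row insertion to T ← x starting from the unique box of (T ← x) not in ρ recovers the pair (T, x). -/
/-- The number of cells of `T` containing the value `v` (entries are 0-indexed). -/
def contentCount (μ : YoungDiagram) (T : SemistandardYoungTableau μ) (v : ℕ) : ℕ :=
  (μ.cells.filter (fun c => T c.1 c.2 = v)).card

/-- `T` has content `lam`: the value `v` occurs `lam v` times (0-indexed), for every `v`. -/
def HasContent {μ : YoungDiagram} (T : SemistandardYoungTableau μ) (lam : List ℕ) : Prop :=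
  ∀ v, contentCount μ T v = lam.getD v 0

/-- The Kostka number `K(μ, lam)`: the number of SSYT of shape `μ` and content `lam`. -/
noncomputable def Kostka (μ : YoungDiagram) (lam : List ℕ) : ℕ :=
  Nat.card {T : SemistandardYoungTableau μ // HasContent T lam}

/-- `l` is a partition (written as a list): non-increasing with positive entries. -/
def IsPartitionList (l : List ℕ) : Prop := l.Pairwise (· ≥ ·) ∧ ∀ x ∈ l, 0 < x

/-- `λ^{(i)}` (0-indexed): decrease the `i`-th entry of `l` by one. -/
def decAt (l : List ℕ) (i : ℕ) : List ℕ := l.set i (l.getD i 0 - 1)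
/-- One pass of RSK row bumping on raw entry functions.  `bumpEntries rowLen fuel i y T`
inserts `y` into row `i` of the entry function `T` (whose row lengths are given by `rowLen`),
bumping entries down row by row; it returns the new entry function together with the
coordinates of the newly created box. -/
def bumpEntries (rowLen : ℕ → ℕ) : ℕ → ℕ → ℕ → (ℕ → ℕ → ℕ) → ((ℕ → ℕ → ℕ) × (ℕ × ℕ))
  | 0, i, y, T => ((fun p q => if p = i ∧ q = rowLen i then y else T p q), (i, rowLen i))
  | fuel + 1, i, y, T =>
    if h : ∃ j, j < rowLen i ∧ y < T i j then
      bumpEntries rowLen fuel (i + 1) (T i (Nat.find h))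
        (fun p q => if p = i ∧ q = Nat.find h then y else T p q)
    else ((fun p q => if p = i ∧ q = rowLen i then y else T p q), (i, rowLen i))

/-- RSK row insertion `T ← x`, returned as a raw entry function together with the
newly created box. -/
def rowInsert {μ : YoungDiagram} (T : SemistandardYoungTableau μ) (x : ℕ) :
    (ℕ → ℕ → ℕ) × (ℕ × ℕ) :=
  bumpEntries μ.rowLen (μ.colLen 0 + 1) 0 x (fun i j => T i j)

/-- One pass of reverse row bumping: `revBumpAux rowLen i y S` reverse-inserts `y` into
row `i` of `S` (replacing the rightmost entry smaller than `y`, which is bumped up into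
row `i - 1`, and so on), returning the new entry function and the finally ejected value. -/
def revBumpAux (rowLen : ℕ → ℕ) : ℕ → ℕ → (ℕ → ℕ → ℕ) → ((ℕ → ℕ → ℕ) × ℕ)
  | 0, y, S =>
    if _h : ∃ j, j < rowLen 0 ∧ S 0 j < y then
      let j := Nat.findGreatest (fun j => j < rowLen 0 ∧ S 0 j < y) (rowLen 0)
      ((fun p q => if p = 0 ∧ q = j then y else S p q), S 0 j)
    else (S, y)
  | i + 1, y, S =>
    if _h : ∃ j, j < rowLen (i + 1) ∧ S (i + 1) j < y then
      let j := Nat.findGreatest (fun j => j < rowLen (i + 1) ∧ S (i + 1) j < y) (rowLen (i + 1))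
      revBumpAux rowLen i (S (i + 1) j) (fun p q => if p = i + 1 ∧ q = j then y else S p q)
    else (S, y)

/-- Reverse row insertion starting at the box `(i, j)` of the raw entry function `S`:
the box is removed and its entry is reverse-bumped up through the rows above.
The result is the new entry function together with the ejected value. -/
def reverseInsert (rowLen : ℕ → ℕ) (S : ℕ → ℕ → ℕ) (i j : ℕ) : (ℕ → ℕ → ℕ) × ℕ :=
  match i with
  | 0 => ((fun p q => if p = 0 ∧ q = j then 0 else S p q), S 0 j)
  | i' + 1 => revBumpAux rowLen i' (S (i' + 1) j)
      (fun p q => if p = i' + 1 ∧ q = j then 0 else S p q)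

section RSKAux

/-- The expected result of the reverse process once it has worked back up to row `i`. -/
def revFinish (rowLen : ℕ → ℕ) (i y : ℕ) (S : ℕ → ℕ → ℕ) : (ℕ → ℕ → ℕ) × ℕ :=
  match i with
  | 0 => (S, y)
  | i' + 1 => revBumpAux rowLen i' y S

variable (ρ : YoungDiagram) (T : SemistandardYoungTableau ρ)

lemma rsk_stop (i y : ℕ) (S : ℕ → ℕ → ℕ) (hS : ∀ p q, i ≤ p → S p q = T p q) :
    reverseInsert ρ.rowLen (fun p q => if p = i ∧ q = ρ.rowLen i then y else S p q) i (ρ.rowLen i)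
      = revFinish ρ.rowLen i y S := by
  have hz : S i (ρ.rowLen i) = 0 := by
    rw [hS i _ le_rfl]
    exact T.zeros (by simp [YoungDiagram.mem_iff_lt_rowLen])
  have hrem : (fun p q => if p = i ∧ q = ρ.rowLen i then (0:ℕ) else
      if p = i ∧ q = ρ.rowLen i then y else S p q) = S := by
    funext p q
    by_cases h : p = i ∧ q = ρ.rowLen i
    · obtain ⟨rfl, rfl⟩ := h; simp [hz]
    · simp [h]
  cases i with
  | zero =>
      simp only [reverseInsert, revFinish]
      rw [show ((fun p q => if p = 0 ∧ q = ρ.rowLen 0 then (0:ℕ) else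
          if p = 0 ∧ q = ρ.rowLen 0 then y else S p q)) = S from hrem]
      simp
  | succ i' =>
      simp only [reverseInsert, revFinish]
      rw [show ((fun p q => if p = i' + 1 ∧ q = ρ.rowLen (i' + 1) then (0:ℕ) else
          if p = i' + 1 ∧ q = ρ.rowLen (i' + 1) then y else S p q)) = S from hrem]
      simp

lemma rsk_rev_step (i y : ℕ) (S : ℕ → ℕ → ℕ) (hS : ∀ p q, i ≤ p → S p q = T p q)
    (h : ∃ j, j < ρ.rowLen i ∧ y < S i j) :
    revBumpAux ρ.rowLen i (S i (Nat.find h))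
        (fun p q => if p = i ∧ q = Nat.find h then y else S p q)
      = revFinish ρ.rowLen i y S := by
  set j := Nat.find h with hj_def
  obtain ⟨hjlt, hylt⟩ := Nat.find_spec h
  set S₁ : ℕ → ℕ → ℕ := fun p q => if p = i ∧ q = j then y else S p q with hS₁
  have hS₁j : S₁ i j = y := by simp [hS₁]
  have h' : ∃ q, q < ρ.rowLen i ∧ S₁ i q < S i j := ⟨j, hjlt, by rw [hS₁j]; exact hylt⟩
  have hg : Nat.findGreatest (fun q => q < ρ.rowLen i ∧ S₁ i q < S i j) (ρ.rowLen i) = j := by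
    rw [Nat.findGreatest_eq_iff]
    refine ⟨hjlt.le, fun _ => ⟨hjlt, by rw [hS₁j]; exact hylt⟩, ?_⟩
    intro n hn hnb hP
    obtain ⟨hn1, hn2⟩ := hP
    have hne : ¬(i = i ∧ n = j) := fun hc => absurd hc.2 (Nat.ne_of_gt hn)
    have h1 : S₁ i n = S i n := if_neg hne
    have h2 : S i j ≤ S i n := by
      rw [hS i j le_rfl, hS i n le_rfl]
      exact T.row_weak hn (by rwa [YoungDiagram.mem_iff_lt_rowLen])
    rw [h1] at hn2; omega
  have hrest : (fun p q => if p = i ∧ q = j then S i j else S₁ p q) = S := by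
    funext p q
    by_cases hc : p = i ∧ q = j
    · obtain ⟨rfl, rfl⟩ := hc; simp [hS₁]
    · simp only [if_neg hc, hS₁]
  cases i with
  | zero =>
      rw [revBumpAux, dif_pos h']
      simp only [revFinish, hg, hS₁j]
      rw [show (fun p q => if p = 0 ∧ q = j then S 0 j else S₁ p q) = S from hrest]
  | succ i' =>
      rw [revBumpAux, dif_pos h']
      simp only [revFinish, hg, hS₁j]
      rw [show (fun p q => if p = i' + 1 ∧ q = j then S (i' + 1) j else S₁ p q) = S from hrest]

lemma rsk_key : ∀ (fuel i y : ℕ) (S : ℕ → ℕ → ℕ), (∀ p q, i ≤ p → S p q = T p q) →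
      i ≤ (bumpEntries ρ.rowLen fuel i y S).2.1 ∧
      (bumpEntries ρ.rowLen fuel i y S).2.2 = ρ.rowLen (bumpEntries ρ.rowLen fuel i y S).2.1 ∧
      reverseInsert ρ.rowLen (bumpEntries ρ.rowLen fuel i y S).1
          (bumpEntries ρ.rowLen fuel i y S).2.1 (bumpEntries ρ.rowLen fuel i y S).2.2
        = revFinish ρ.rowLen i y S
  | 0, i, y, S, hS => ⟨le_rfl, rfl, rsk_stop ρ T i y S hS⟩
  | fuel+1, i, y, S, hS => by
      by_cases h : ∃ j, j < ρ.rowLen i ∧ y < S i j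
      · rw [show bumpEntries ρ.rowLen (fuel+1) i y S
            = bumpEntries ρ.rowLen fuel (i + 1) (S i (Nat.find h))
                (fun p q => if p = i ∧ q = Nat.find h then y else S p q) by
            rw [bumpEntries, dif_pos h]]
        have hS' : ∀ p q, i + 1 ≤ p →
            (fun p q => if p = i ∧ q = Nat.find h then y else S p q) p q = T p q := by
          intro p q hp
          simp only
          rw [if_neg (fun hc => by omega), hS p q (by omega)]
        obtain ⟨h1, h2, h3⟩ := rsk_key fuel (i + 1) (S i (Nat.find h)) _ hS'
        refine ⟨le_trans (Nat.le_succ i) h1, h2, ?_⟩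
        rw [h3]
        exact rsk_rev_step ρ T i y S hS h
      · rw [show bumpEntries ρ.rowLen (fuel+1) i y S
            = ((fun p q => if p = i ∧ q = ρ.rowLen i then y else S p q), (i, ρ.rowLen i)) by
            rw [bumpEntries, dif_neg h]]
        exact ⟨le_rfl, rfl, rsk_stop ρ T i y S hS⟩

end RSKAux

/-- **Row insertion is invertible.**  If `T` is a semistandard Young tableau of shape `ρ`
and `x` a value, then applying reverse row insertion to `T ← x`, starting from the unique
box of `T ← x` not in `ρ`, recovers the pair `(T, x)`. -/
theorem reverseInsert_rowInsert (ρ : YoungDiagram) (T : SemistandardYoungTableau ρ) (x : ℕ) :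
    (rowInsert T x).2 ∉ ρ ∧
    reverseInsert ρ.rowLen (rowInsert T x).1 (rowInsert T x).2.1 (rowInsert T x).2.2 =
      ((fun i j => T i j), x) := by
  obtain ⟨h1, h2, h3⟩ := rsk_key ρ T (ρ.colLen 0 + 1) 0 x (fun i j => T i j)
    (fun p q _ => rfl)
  refine ⟨?_, h3⟩
  intro hmem
  rw [show (rowInsert T x).2 = ((rowInsert T x).2.1, (rowInsert T x).2.2) from rfl,
    YoungDiagram.mem_iff_lt_rowLen] at hmem
  have h2' : (rowInsert T x).2.2 = ρ.rowLen (rowInsert T x).2.1 := h2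
  rw [h2'] at hmem
  exact lt_irrefl _ hmem
end

section
/- For partitions ρ ⊢ n−1 and λ ⊢ n, the number of pairs (μ, T) with μ ⊢ n, ρ ⪯ μ, and T ∈ SSYT(μ, λ) equals the number of pairs (x, S) with 1 ≤ x ≤ length(λ), λ_x ≥ 1, and S ∈ SSYT(ρ, λ^{(x)}). -/
open Finset

namespace RSKIns

open scoped Classical

variable (ρ : YoungDiagram) (S : SemistandardYoungTableau ρ) (x : ℕ)

/-- There is a cell in row `i` of `ρ` whose entry exceeds `v`. -/
def Q (i v : ℕ) : Prop := ∃ j, (i, j) ∈ ρ ∧ v < S i j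

/-- The sequence of values bumped during row insertion of `x`. -/
noncomputable def inVal : ℕ → ℕ
  | 0 => x
  | i + 1 => if h : Q ρ S i (inVal i) then S i (Nat.find h) else 0

/-- The bump column in row `i` (or the row length, at the final row). -/
noncomputable def insCol (i : ℕ) : ℕ :=
  if h : Q ρ S i (inVal ρ S x i) then Nat.find h else ρ.rowLen i

lemma exStop : ∃ i, ¬ Q ρ S i (inVal ρ S x i) := by
  refine ⟨ρ.colLen 0, ?_⟩
  rintro ⟨j, hj, -⟩
  rw [YoungDiagram.mem_iff_lt_colLen] at hj
  exact absurd (ρ.colLen_anti 0 j (Nat.zero_le j)) (by omega)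

/-- The row where insertion terminates. -/
noncomputable def stopRow : ℕ := Nat.find (exStop ρ S x)

variable {ρ S x}

lemma q_of_lt {i : ℕ} (h : i < stopRow ρ S x) : Q ρ S i (inVal ρ S x i) := by
  have := Nat.find_min (exStop ρ S x) h
  simpa using this

lemma not_q_stop : ¬ Q ρ S (stopRow ρ S x) (inVal ρ S x (stopRow ρ S x)) :=
  Nat.find_spec (exStop ρ S x)

lemma insCol_spec {i : ℕ} (h : i < stopRow ρ S x) :
    (i, insCol ρ S x i) ∈ ρ ∧ inVal ρ S x i < S i (insCol ρ S x i) := by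
  rw [insCol, dif_pos (q_of_lt h)]
  exact Nat.find_spec (q_of_lt h)

lemma inVal_succ {i : ℕ} (h : i < stopRow ρ S x) :
    inVal ρ S x (i + 1) = S i (insCol ρ S x i) := by
  rw [inVal, dif_pos (q_of_lt h), insCol, dif_pos (q_of_lt h)]

lemma insCol_stop : insCol ρ S x (stopRow ρ S x) = ρ.rowLen (stopRow ρ S x) :=
  dif_neg not_q_stop

lemma insCol_lt_rowLen {i : ℕ} (h : i < stopRow ρ S x) :
    insCol ρ S x i < ρ.rowLen i :=
  YoungDiagram.mem_iff_lt_rowLen.mp (insCol_spec h).1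

lemma insCol_le_rowLen {i : ℕ} (h : i ≤ stopRow ρ S x) :
    insCol ρ S x i ≤ ρ.rowLen i := by
  rcases lt_or_eq_of_le h with h | h
  · exact (insCol_lt_rowLen h).le
  · rw [h, insCol_stop]

lemma entry_le_inVal {i j : ℕ} (hi : i ≤ stopRow ρ S x) (hj : j < insCol ρ S x i) :
    S i j ≤ inVal ρ S x i := by
  have hmem : (i, j) ∈ ρ := by
    rw [YoungDiagram.mem_iff_lt_rowLen]
    exact lt_of_lt_of_le hj (insCol_le_rowLen hi)
  rcases lt_or_eq_of_le hi with h | h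
  · have := Nat.find_min (q_of_lt h) (by rwa [insCol, dif_pos (q_of_lt h)] at hj)
    push_neg at this
    exact this hmem
  · subst h
    by_contra hcon
    exact not_q_stop ⟨j, hmem, by omega⟩

lemma inVal_lt_succ {i : ℕ} (h : i < stopRow ρ S x) :
    inVal ρ S x i < inVal ρ S x (i + 1) := by
  rw [inVal_succ h]; exact (insCol_spec h).2

lemma inVal_lt {i i' : ℕ} (h : i < i') (h' : i' ≤ stopRow ρ S x) :
    inVal ρ S x i < inVal ρ S x i' := by
  induction i' with
  | zero => omega
  | succ k ih =>
    have hk : k < stopRow ρ S x := by omega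
    rcases Nat.lt_succ_iff_lt_or_eq.mp h with h | h
    · exact lt_trans (ih h (by omega)) (inVal_lt_succ hk)
    · subst h; exact inVal_lt_succ hk

lemma insCol_succ_le {i : ℕ} (h : i < stopRow ρ S x) :
    insCol ρ S x (i + 1) ≤ insCol ρ S x i := by
  by_cases hmem : (i + 1, insCol ρ S x i) ∈ ρ
  · have hq : Q ρ S (i + 1) (inVal ρ S x (i + 1)) :=
      ⟨insCol ρ S x i, hmem, by rw [inVal_succ h]; exact S.col_strict (Nat.lt_succ_self i) hmem⟩
    rw [insCol, dif_pos hq]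
    exact Nat.find_le ⟨hmem, by rw [inVal_succ h]; exact S.col_strict (Nat.lt_succ_self i) hmem⟩
  · rw [YoungDiagram.mem_iff_lt_rowLen, not_lt] at hmem
    rw [insCol]
    split
    · next hq =>
      have h1 := (Nat.find_spec hq).1
      rw [YoungDiagram.mem_iff_lt_rowLen] at h1
      omega
    · exact hmem

lemma insCol_anti {i i' : ℕ} (h : i ≤ i') (h' : i' ≤ stopRow ρ S x) :
    insCol ρ S x i' ≤ insCol ρ S x i := by
  induction i' with
  | zero => obtain rfl := Nat.le_zero.mp h; rfl
  | succ k ih =>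
    rcases Nat.le_succ_iff.mp h with h | h
    · exact le_trans (insCol_succ_le (by omega)) (ih h (by omega))
    · subst h; rfl

lemma corner_not_mem : (stopRow ρ S x, insCol ρ S x (stopRow ρ S x)) ∉ ρ := by
  rw [YoungDiagram.mem_iff_lt_rowLen, insCol_stop]
  omega

variable (ρ S x) in
/-- The shape after insertion: `ρ` plus one box at the end of the stop row. -/
noncomputable def insShape : YoungDiagram where
  cells := insert (stopRow ρ S x, insCol ρ S x (stopRow ρ S x)) ρ.cells
  isLowerSet := by
    rintro ⟨a1, a2⟩ ⟨b1, b2⟩ ⟨hb1, hb2⟩ ha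
    simp only [Finset.coe_insert, Set.mem_insert_iff, Finset.mem_coe, Prod.mk.injEq] at ha ⊢
    simp only [YoungDiagram.mem_cells] at ha ⊢
    rcases ha with ⟨rfl, rfl⟩ | ha
    · simp only [] at hb1 hb2
      by_cases hb : b1 = stopRow ρ S x ∧ b2 = insCol ρ S x (stopRow ρ S x)
      · exact Or.inl hb
      · refine Or.inr ?_
        rw [YoungDiagram.mem_iff_lt_rowLen]
        rcases lt_or_eq_of_le hb1 with h1 | h1
        · have h2 : insCol ρ S x (stopRow ρ S x) ≤ insCol ρ S x b1 :=
            insCol_anti hb1 le_rfl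
          have h3 := insCol_lt_rowLen h1
          omega
        · subst h1
          have : b2 ≠ insCol ρ S x (stopRow ρ S x) := fun hcon => hb ⟨rfl, hcon⟩
          rw [insCol_stop] at hb2 this
          omega
    · exact Or.inr (ρ.up_left_mem hb1 hb2 ha)

lemma mem_insShape {i j : ℕ} :
    (i, j) ∈ insShape ρ S x ↔
      (i, j) ∈ ρ ∨ (i = stopRow ρ S x ∧ j = insCol ρ S x (stopRow ρ S x)) := by
  show (i, j) ∈ insert _ ρ.cells ↔ _
  simp only [Finset.mem_insert, Prod.mk.injEq, YoungDiagram.mem_cells]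
  tauto

lemma le_insShape : ρ ≤ insShape ρ S x := by
  intro c hc
  obtain ⟨i, j⟩ := c
  exact mem_insShape.mpr (Or.inl hc)

lemma card_insShape : (insShape ρ S x).card = ρ.card + 1 := by
  show (insert _ ρ.cells).card = _
  rw [Finset.card_insert_of_notMem (by simpa using corner_not_mem)]

variable (ρ S x) in
/-- The entries after insertion. -/
noncomputable def insEntry (i j : ℕ) : ℕ :=
  if i ≤ stopRow ρ S x ∧ j = insCol ρ S x i then inVal ρ S x i else S i j

lemma inVal_lt_entry_right {i j : ℕ} (hi : i < stopRow ρ S x) (hj : insCol ρ S x i ≤ j)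
    (hm : (i, j) ∈ ρ) : inVal ρ S x i < S i j :=
  lt_of_lt_of_le (insCol_spec hi).2 (S.row_weak_of_le hj hm)

variable (ρ S x) in
/-- The tableau after insertion. -/
noncomputable def insTab : SemistandardYoungTableau (insShape ρ S x) where
  entry := insEntry ρ S x
  row_weak' := by
    intro i j1 j2 hj hcell
    unfold insEntry
    by_cases h2 : i ≤ stopRow ρ S x ∧ j2 = insCol ρ S x i
    · rw [if_pos h2, if_neg (by omega)]
      exact entry_le_inVal h2.1 (h2.2 ▸ hj)
    · rw [if_neg h2]
      have hρ2 : (i, j2) ∈ ρ := by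
        rcases mem_insShape.mp hcell with h | h
        · exact h
        · exact absurd ⟨h.1.le, h.1 ▸ h.2⟩ h2
      by_cases h1 : i ≤ stopRow ρ S x ∧ j1 = insCol ρ S x i
      · rw [if_pos h1]
        rcases lt_or_eq_of_le h1.1 with h | h
        · exact (inVal_lt_entry_right h (by omega) hρ2).le
        · exfalso
          obtain ⟨-, h1b⟩ := h1
          rw [h, insCol_stop] at h1b
          have h2m := YoungDiagram.mem_iff_lt_rowLen.mp hρ2
          rw [h] at h2m
          omega
      · rw [if_neg h1]
        exact S.row_weak hj hρ2
  col_strict' := by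
    intro i1 i2 j hi hcell
    unfold insEntry
    by_cases h2 : i2 ≤ stopRow ρ S x ∧ j = insCol ρ S x i2
    · rw [if_pos h2]
      by_cases h1 : i1 ≤ stopRow ρ S x ∧ j = insCol ρ S x i1
      · rw [if_pos h1]
        exact inVal_lt hi h2.1
      · rw [if_neg h1]
        -- show S i1 j < inVal i2 with j = insCol i2, i1 < i2 ≤ stopRow
        have hi2pos : 0 < i2 := by omega
        set k := i2 - 1 with hk
        have hkstop : k < stopRow ρ S x := by omega
        have hkmem : (k, j) ∈ ρ := by
          rw [YoungDiagram.mem_iff_lt_rowLen]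
          have := insCol_anti (show k ≤ i2 by omega) h2.1
          have := insCol_lt_rowLen hkstop
          omega
        by_cases hcc : insCol ρ S x k = j
        · -- then i1 < k (else i1 = k would be modified), use column strictness
          have hi1k : i1 < k := by
            rcases lt_or_eq_of_le (show i1 ≤ k by omega) with h | h
            · exact h
            · exact absurd ⟨by omega, by rw [← h] at hcc; omega⟩ h1
          have : S i1 j < S k j := S.col_strict hi1k hkmem
          have hsk : S k j = inVal ρ S x i2 := by
            have h6 := inVal_succ hkstop
            rw [hcc, show k + 1 = i2 by omega] at h6
            omega
          omega
        · have hjlt : j < insCol ρ S x k := by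
            have h7 := insCol_anti (show k ≤ i2 by omega) h2.1
            have h8 := h2.2
            omega
          have h3 : S k j ≤ inVal ρ S x k := entry_le_inVal hkstop.le hjlt
          have h4 : S i1 j ≤ S k j := S.col_weak (by omega) hkmem
          have h5 : inVal ρ S x k < inVal ρ S x i2 := inVal_lt (by omega) h2.1
          omega
    · rw [if_neg h2]
      have hρ2 : (i2, j) ∈ ρ := by
        rcases mem_insShape.mp hcell with h | h
        · exact h
        · exact absurd ⟨h.1.le, h.1 ▸ h.2⟩ h2
      by_cases h1 : i1 ≤ stopRow ρ S x ∧ j = insCol ρ S x i1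
      · rw [if_pos h1]
        rcases lt_or_eq_of_le h1.1 with h | h
        · have hmem1 : (i1, j) ∈ ρ := ρ.up_left_mem hi.le le_rfl hρ2
          exact lt_of_lt_of_le (inVal_lt_entry_right h (le_of_eq h1.2.symm) hmem1)
            (S.col_weak hi.le hρ2)
        · exfalso
          have hmem1 : (i1, j) ∈ ρ := ρ.up_left_mem hi.le le_rfl hρ2
          have h2m := YoungDiagram.mem_iff_lt_rowLen.mp hmem1
          obtain ⟨-, h1b⟩ := h1
          rw [h, insCol_stop] at h1b
          rw [h] at h2m
          omega
      · rw [if_neg h1]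
        exact S.col_strict hi hρ2
  zeros' := by
    intro i j hij
    unfold insEntry
    rw [if_neg, S.zeros (fun hc => hij (mem_insShape.mpr (Or.inl hc)))]
    rintro ⟨h1, rfl⟩
    rcases lt_or_eq_of_le h1 with h | h
    · exact hij (mem_insShape.mpr (Or.inl (insCol_spec h).1))
    · exact hij (mem_insShape.mpr (Or.inr ⟨h, by rw [h]⟩))

@[simp] lemma insTab_apply (i j : ℕ) : insTab ρ S x i j = insEntry ρ S x i j := rfl

lemma inVal_zero : inVal ρ S x 0 = x := rfl

lemma telescope (v r : ℕ) :
    ((range r).filter (fun i => inVal ρ S x i = v)).card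
        + (if inVal ρ S x r = v then 1 else 0)
      = ((range r).filter (fun i => inVal ρ S x (i + 1) = v)).card
        + (if inVal ρ S x 0 = v then 1 else 0) := by
  induction r with
  | zero => simp
  | succ k ih =>
    have e1 : ((range (k + 1)).filter (fun i => inVal ρ S x i = v)).card
        = ((range k).filter (fun i => inVal ρ S x i = v)).card
          + (if inVal ρ S x k = v then 1 else 0) := by
      rw [Finset.range_add_one, Finset.filter_insert]
      split_ifs
      · rw [Finset.card_insert_of_notMem (by simp)]
      · omega
    have e2 : ((range (k + 1)).filter (fun i => inVal ρ S x (i + 1) = v)).card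
        = ((range k).filter (fun i => inVal ρ S x (i + 1) = v)).card
          + (if inVal ρ S x (k + 1) = v then 1 else 0) := by
      rw [Finset.range_add_one, Finset.filter_insert]
      split_ifs
      · rw [Finset.card_insert_of_notMem (by simp)]
      · omega
    omega

lemma insCol_eq_of_q {i : ℕ} (h : Q ρ S i (inVal ρ S x i)) :
    insCol ρ S x i = Nat.find h := dif_pos h

lemma inVal_succ_of_q {i : ℕ} (h : Q ρ S i (inVal ρ S x i)) :
    inVal ρ S x (i + 1) = S i (insCol ρ S x i) := by
  rw [inVal, dif_pos h, insCol, dif_pos h]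

lemma stopRow_eq {r : ℕ} (h1 : ¬ Q ρ S r (inVal ρ S x r))
    (h2 : ∀ i < r, Q ρ S i (inVal ρ S x i)) : stopRow ρ S x = r := by
  apply le_antisymm (Nat.find_min' (exStop ρ S x) h1)
  by_contra hcon
  push_neg at hcon
  exact Nat.find_spec (exStop ρ S x) (h2 _ hcon)

lemma sigma_eq {μ₁ μ₂ : YoungDiagram} (T₁ : SemistandardYoungTableau μ₁)
    (T₂ : SemistandardYoungTableau μ₂) (h : μ₁ = μ₂) (h2 : ∀ i j, T₁ i j = T₂ i j) :
    (⟨μ₁, T₁⟩ : Σ ν, SemistandardYoungTableau ν) = ⟨μ₂, T₂⟩ := by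
  subst h
  congr 1
  exact SemistandardYoungTableau.ext h2

lemma insTab_content (v : ℕ) :
    contentCount (insShape ρ S x) (insTab ρ S x) v
      = contentCount ρ S v + (if x = v then 1 else 0) := by
  unfold contentCount
  have hcells : (insShape ρ S x).cells
      = insert (stopRow ρ S x, insCol ρ S x (stopRow ρ S x)) ρ.cells := rfl
  set r := stopRow ρ S x with hr
  set path : Finset (ℕ × ℕ) := (range r).image (fun i => (i, insCol ρ S x i)) with hpath
  have hsub : path ⊆ ρ.cells := by
    intro c hc
    rw [hpath, Finset.mem_image] at hc
    obtain ⟨i, hi, rfl⟩ := hc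
    rw [Finset.mem_range] at hi
    exact (insCol_spec hi).1
  have hsplit : ρ.cells = path ∪ (ρ.cells \ path) := (Finset.union_sdiff_of_subset hsub).symm
  have hcorner : insEntry ρ S x r (insCol ρ S x r) = inVal ρ S x r := if_pos ⟨le_rfl, rfl⟩
  have hcnot : (r, insCol ρ S x r) ∉ ρ.cells := by
    rw [YoungDiagram.mem_cells]; exact corner_not_mem
  have hoff : ∀ c ∈ ρ.cells \ path, insEntry ρ S x c.1 c.2 = S c.1 c.2 := by
    intro c hc
    rw [Finset.mem_sdiff] at hc
    obtain ⟨hc1, hc2⟩ := hc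
    obtain ⟨i, j⟩ := c
    apply if_neg
    rintro ⟨h1, h2⟩
    simp only [] at h1 h2
    rcases lt_or_eq_of_le h1 with h | h
    · exact hc2 (by rw [hpath, Finset.mem_image]
                    exact ⟨i, Finset.mem_range.mpr h, by rw [h2]⟩)
    · rw [YoungDiagram.mem_cells, YoungDiagram.mem_iff_lt_rowLen] at hc1
      rw [h, insCol_stop] at h2
      rw [h] at hc1
      omega
  have keyT : (ρ.cells.filter (fun c => insEntry ρ S x c.1 c.2 = v)).card
      = (path.filter (fun c => insEntry ρ S x c.1 c.2 = v)).card
        + ((ρ.cells \ path).filter (fun c => insEntry ρ S x c.1 c.2 = v)).card := by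
    conv_lhs => rw [hsplit]
    rw [Finset.filter_union,
      Finset.card_union_of_disjoint (Finset.disjoint_filter_filter Finset.disjoint_sdiff)]
  have keyS : (ρ.cells.filter (fun c => S c.1 c.2 = v)).card
      = (path.filter (fun c => S c.1 c.2 = v)).card
        + ((ρ.cells \ path).filter (fun c => S c.1 c.2 = v)).card := by
    conv_lhs => rw [hsplit]
    rw [Finset.filter_union,
      Finset.card_union_of_disjoint (Finset.disjoint_filter_filter Finset.disjoint_sdiff)]
  have hpathT : (path.filter (fun c => insEntry ρ S x c.1 c.2 = v)).card
      = ((range r).filter (fun i => inVal ρ S x i = v)).card := by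
    rw [hpath, Finset.filter_image, Finset.card_image_of_injOn (by
      intro a ha b hb hab
      simpa using congrArg Prod.fst hab)]
    congr 1
    apply Finset.filter_congr
    intro i hi
    rw [Finset.mem_range] at hi
    have h9 : insEntry ρ S x i (insCol ρ S x i) = inVal ρ S x i := if_pos ⟨hi.le, rfl⟩
    simp [h9]
  have hpathS : (path.filter (fun c => S c.1 c.2 = v)).card
      = ((range r).filter (fun i => inVal ρ S x (i + 1) = v)).card := by
    rw [hpath, Finset.filter_image, Finset.card_image_of_injOn (by
      intro a ha b hb hab
      simpa using congrArg Prod.fst hab)]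
    congr 1
    apply Finset.filter_congr
    intro i hi
    rw [Finset.mem_range] at hi
    rw [inVal_succ hi]
  have hoffeq : ((ρ.cells \ path).filter (fun c => insEntry ρ S x c.1 c.2 = v))
      = ((ρ.cells \ path).filter (fun c => S c.1 c.2 = v)) := by
    apply Finset.filter_congr
    intro c hc
    rw [hoff c hc]
  have htel := telescope (ρ := ρ) (S := S) (x := x) v r
  rw [inVal_zero] at htel
  have hmain : (ρ.cells.filter (fun c => insEntry ρ S x c.1 c.2 = v)).card
        + (if inVal ρ S x r = v then 1 else 0)
      = (ρ.cells.filter (fun c => S c.1 c.2 = v)).card + (if x = v then 1 else 0) := by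
    rw [keyT, keyS, hpathT, hpathS, hoffeq]
    omega
  rw [hcells, Finset.filter_insert]
  simp only [insTab_apply]
  simp only [hcorner]
  by_cases hv : inVal ρ S x r = v
  · rw [if_pos hv]; erw [Finset.card_insert_of_notMem
      (fun hmem => hcnot (Finset.mem_of_mem_filter _ hmem))]
    rw [if_pos hv] at hmain
    exact hmain
  · rw [if_neg hv]
    rw [if_neg hv, Nat.add_zero] at hmain
    exact hmain

section Reverse

variable (μ : YoungDiagram) (T : SemistandardYoungTableau μ) (ρ : YoungDiagram)

/-- Row of the removed corner. -/
noncomputable def rRow : ℕ := (μ.cells \ ρ.cells).sup Prod.fst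

/-- Column of the removed corner. -/
noncomputable def rCol0 : ℕ := (μ.cells \ ρ.cells).sup Prod.snd

/-- The reverse bumping sequence: `g k` is the (value, column) extracted at row `rRow - k`. -/
noncomputable def g : ℕ → ℕ × ℕ
  | 0 => (T (rRow μ ρ) (rCol0 μ ρ), rCol0 μ ρ)
  | k + 1 =>
    (T (rRow μ ρ - (k + 1))
       (Nat.findGreatest (fun j => (rRow μ ρ - (k + 1), j) ∈ ρ ∧
          T (rRow μ ρ - (k + 1)) j < (g k).1) (ρ.rowLen (rRow μ ρ - (k + 1)))),
     Nat.findGreatest (fun j => (rRow μ ρ - (k + 1), j) ∈ ρ ∧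
        T (rRow μ ρ - (k + 1)) j < (g k).1) (ρ.rowLen (rRow μ ρ - (k + 1))))

/-- Value extracted at row `i`. -/
noncomputable def rv (i : ℕ) : ℕ := (g μ T ρ (rRow μ ρ - i)).1

/-- Column of the reverse bumping path at row `i`. -/
noncomputable def rc (i : ℕ) : ℕ := (g μ T ρ (rRow μ ρ - i)).2

/-- The value expelled at the top by reverse insertion. -/
noncomputable def revX : ℕ := rv μ T ρ 0

/-- Entries of the tableau obtained by reverse insertion. -/
noncomputable def revEntry (i j : ℕ) : ℕ :=
  if (i, j) ∈ ρ then
    (if i < rRow μ ρ ∧ j = rc μ T ρ i then rv μ T ρ (i + 1) else T i j)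
  else 0

variable {μ T ρ}

lemma diff_eq (hle : ρ ≤ μ) (hcard : μ.card = ρ.card + 1) :
    μ.cells \ ρ.cells = {(rRow μ ρ, rCol0 μ ρ)} := by
  have hsub : ρ.cells ⊆ μ.cells := YoungDiagram.cells_subset_iff.mpr hle
  have h1 : (μ.cells \ ρ.cells).card = 1 := by
    rw [Finset.card_sdiff_of_subset hsub]
    have h2 : μ.cells.card = ρ.cells.card + 1 := hcard
    omega
  obtain ⟨a, ha⟩ := Finset.card_eq_one.mp h1
  rw [ha]
  unfold rRow rCol0
  rw [ha, Finset.sup_singleton, Finset.sup_singleton]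

lemma corner_mem (hle : ρ ≤ μ) (hcard : μ.card = ρ.card + 1) :
    (rRow μ ρ, rCol0 μ ρ) ∈ μ ∧ (rRow μ ρ, rCol0 μ ρ) ∉ ρ := by
  have h : (rRow μ ρ, rCol0 μ ρ) ∈ μ.cells \ ρ.cells := by
    rw [diff_eq hle hcard]; exact Finset.mem_singleton_self _
  rw [Finset.mem_sdiff] at h
  exact ⟨h.1, fun hc => h.2 hc⟩

lemma mem_ρ_iff (hle : ρ ≤ μ) (hcard : μ.card = ρ.card + 1) {c : ℕ × ℕ} :
    c ∈ ρ ↔ c ∈ μ ∧ c ≠ (rRow μ ρ, rCol0 μ ρ) := by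
  constructor
  · intro hc
    refine ⟨hle hc, ?_⟩
    rintro rfl
    exact (corner_mem hle hcard).2 hc
  · rintro ⟨h1, h2⟩
    by_contra hc
    have : c ∈ μ.cells \ ρ.cells := Finset.mem_sdiff.mpr ⟨h1, fun h => hc h⟩
    rw [diff_eq hle hcard, Finset.mem_singleton] at this
    exact h2 this

lemma rowLen_corner (hle : ρ ≤ μ) (hcard : μ.card = ρ.card + 1) :
    ρ.rowLen (rRow μ ρ) = rCol0 μ ρ := by
  have h1 : ¬ (rCol0 μ ρ < ρ.rowLen (rRow μ ρ)) := by
    rw [← YoungDiagram.mem_iff_lt_rowLen]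
    exact (corner_mem hle hcard).2
  rcases Nat.eq_zero_or_pos (rCol0 μ ρ) with h | h
  · omega
  · have h2 : (rRow μ ρ, rCol0 μ ρ - 1) ∈ ρ := by
      rw [mem_ρ_iff hle hcard]
      refine ⟨μ.up_left_mem le_rfl (by omega) (corner_mem hle hcard).1, ?_⟩
      intro hc
      have := congrArg Prod.snd hc
      simp only [] at this
      omega
    rw [YoungDiagram.mem_iff_lt_rowLen] at h2
    omega

lemma g_inv (hle : ρ ≤ μ) (hcard : μ.card = ρ.card + 1) :
    ∀ k, k ≤ rRow μ ρ → (rRow μ ρ - k, (g μ T ρ k).2) ∈ μ ∧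
      (g μ T ρ k).1 = T (rRow μ ρ - k) ((g μ T ρ k).2) := by
  intro k
  induction k with
  | zero =>
    intro _
    show (rRow μ ρ - 0, rCol0 μ ρ) ∈ μ ∧ _ = _
    rw [Nat.sub_zero]
    exact ⟨(corner_mem hle hcard).1, rfl⟩
  | succ k ih =>
    intro hk
    obtain ⟨ih1, ih2⟩ := ih (by omega)
    have hik : (rRow μ ρ - (k + 1)) + 1 = rRow μ ρ - k := by omega
    have hcμ : ((rRow μ ρ - (k + 1)) + 1, (g μ T ρ k).2) ∈ μ := by rw [hik]; exact ih1
    have hcρ : (rRow μ ρ - (k + 1), (g μ T ρ k).2) ∈ ρ := by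
      rw [mem_ρ_iff hle hcard]
      refine ⟨μ.up_left_mem (by omega) le_rfl hcμ, ?_⟩
      intro hcon
      have := congrArg Prod.fst hcon
      simp only [] at this
      omega
    have hTc : T (rRow μ ρ - (k + 1)) ((g μ T ρ k).2) < (g μ T ρ k).1 := by
      rw [ih2, ← hik]
      exact T.col_strict (Nat.lt_succ_self _) hcμ
    have hcb : (g μ T ρ k).2 ≤ ρ.rowLen (rRow μ ρ - (k + 1)) :=
      (YoungDiagram.mem_iff_lt_rowLen.mp hcρ).le
    have hspec := Nat.findGreatest_spec (P := fun j => (rRow μ ρ - (k + 1), j) ∈ ρ ∧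
        T (rRow μ ρ - (k + 1)) j < (g μ T ρ k).1) hcb ⟨hcρ, hTc⟩
    exact ⟨hle hspec.1, rfl⟩

lemma g_step (hle : ρ ≤ μ) (hcard : μ.card = ρ.card + 1) {k : ℕ} (hk : k + 1 ≤ rRow μ ρ) :
    (rRow μ ρ - (k + 1), (g μ T ρ (k + 1)).2) ∈ ρ ∧
    (g μ T ρ (k + 1)).1 = T (rRow μ ρ - (k + 1)) ((g μ T ρ (k + 1)).2) ∧
    (g μ T ρ (k + 1)).1 < (g μ T ρ k).1 ∧
    (∀ j, (g μ T ρ (k + 1)).2 < j → (rRow μ ρ - (k + 1), j) ∈ ρ →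
      (g μ T ρ k).1 ≤ T (rRow μ ρ - (k + 1)) j) ∧
    (g μ T ρ k).2 ≤ (g μ T ρ (k + 1)).2 := by
  obtain ⟨ih1, ih2⟩ := g_inv (T := T) hle hcard k (by omega)
  have hik : (rRow μ ρ - (k + 1)) + 1 = rRow μ ρ - k := by omega
  have hcμ : ((rRow μ ρ - (k + 1)) + 1, (g μ T ρ k).2) ∈ μ := by rw [hik]; exact ih1
  have hcρ : (rRow μ ρ - (k + 1), (g μ T ρ k).2) ∈ ρ := by
    rw [mem_ρ_iff hle hcard]
    refine ⟨μ.up_left_mem (by omega) le_rfl hcμ, ?_⟩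
    intro hcon
    have := congrArg Prod.fst hcon
    simp only [] at this
    omega
  have hTc : T (rRow μ ρ - (k + 1)) ((g μ T ρ k).2) < (g μ T ρ k).1 := by
    rw [ih2, ← hik]
    exact T.col_strict (Nat.lt_succ_self _) hcμ
  have hcb : (g μ T ρ k).2 ≤ ρ.rowLen (rRow μ ρ - (k + 1)) :=
    (YoungDiagram.mem_iff_lt_rowLen.mp hcρ).le
  have hspec := Nat.findGreatest_spec (P := fun j => (rRow μ ρ - (k + 1), j) ∈ ρ ∧
      T (rRow μ ρ - (k + 1)) j < (g μ T ρ k).1) hcb ⟨hcρ, hTc⟩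
  refine ⟨hspec.1, rfl, hspec.2, ?_, ?_⟩
  · intro j hj hjρ
    have hjb : j ≤ ρ.rowLen (rRow μ ρ - (k + 1)) := (YoungDiagram.mem_iff_lt_rowLen.mp hjρ).le
    have h3 : ¬ ((rRow μ ρ - (k + 1), j) ∈ ρ ∧
        T (rRow μ ρ - (k + 1)) j < (g μ T ρ k).1) :=
      Nat.findGreatest_is_greatest (P := fun j => (rRow μ ρ - (k + 1), j) ∈ ρ ∧
        T (rRow μ ρ - (k + 1)) j < (g μ T ρ k).1) hj hjb
    exact le_of_not_gt (fun hlt => h3 ⟨hjρ, hlt⟩)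
  · exact Nat.le_findGreatest hcb ⟨hcρ, hTc⟩

lemma rv_eq (hle : ρ ≤ μ) (hcard : μ.card = ρ.card + 1) {i : ℕ} (hi : i ≤ rRow μ ρ) :
    rv μ T ρ i = T i (rc μ T ρ i) := by
  have := (g_inv (T := T) hle hcard (rRow μ ρ - i) (by omega)).2
  rw [show rRow μ ρ - (rRow μ ρ - i) = i by omega] at this
  exact this

lemma rc_mem (hle : ρ ≤ μ) (hcard : μ.card = ρ.card + 1) {i : ℕ} (hi : i < rRow μ ρ) :
    (i, rc μ T ρ i) ∈ ρ := by
  have hk : rRow μ ρ - i = (rRow μ ρ - i - 1) + 1 := by omega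
  have := (g_step (T := T) hle hcard (k := rRow μ ρ - i - 1) (by omega)).1
  rw [show rRow μ ρ - (rRow μ ρ - i - 1 + 1) = i by omega] at this
  rw [rc, hk]
  exact this

lemma rv_lt_succ (hle : ρ ≤ μ) (hcard : μ.card = ρ.card + 1) {i : ℕ} (hi : i < rRow μ ρ) :
    rv μ T ρ i < rv μ T ρ (i + 1) := by
  have hk : rRow μ ρ - i = (rRow μ ρ - i - 1) + 1 := by omega
  have := (g_step (T := T) hle hcard (k := rRow μ ρ - i - 1) (by omega)).2.2.1
  rw [show rRow μ ρ - i - 1 = rRow μ ρ - (i + 1) by omega] at this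
  rw [rv, rv, hk, show rRow μ ρ - i - 1 = rRow μ ρ - (i + 1) by omega] at *
  exact this

lemma rv_max (hle : ρ ≤ μ) (hcard : μ.card = ρ.card + 1) {i : ℕ} (hi : i < rRow μ ρ)
    {j : ℕ} (hj : rc μ T ρ i < j) (hjρ : (i, j) ∈ ρ) : rv μ T ρ (i + 1) ≤ T i j := by
  have hk : rRow μ ρ - i = (rRow μ ρ - i - 1) + 1 := by omega
  have h := (g_step (T := T) hle hcard (k := rRow μ ρ - i - 1) (by omega)).2.2.2.1
  rw [show rRow μ ρ - (rRow μ ρ - i - 1 + 1) = i by omega] at h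
  have h2 := h j (by rw [rc, hk] at hj; exact hj) hjρ
  rw [rv, show rRow μ ρ - (i + 1) = rRow μ ρ - i - 1 by omega]
  exact h2

lemma rc_anti_succ (hle : ρ ≤ μ) (hcard : μ.card = ρ.card + 1) {i : ℕ} (hi : i < rRow μ ρ) :
    rc μ T ρ (i + 1) ≤ rc μ T ρ i := by
  have hk : rRow μ ρ - i = (rRow μ ρ - i - 1) + 1 := by omega
  have := (g_step (T := T) hle hcard (k := rRow μ ρ - i - 1) (by omega)).2.2.2.2
  rw [rc, rc, hk, show rRow μ ρ - (i + 1) = rRow μ ρ - i - 1 by omega]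
  exact this

lemma rv_lt (hle : ρ ≤ μ) (hcard : μ.card = ρ.card + 1) {i i' : ℕ} (h : i < i')
    (h' : i' ≤ rRow μ ρ) : rv μ T ρ i < rv μ T ρ i' := by
  induction i' with
  | zero => omega
  | succ k ih =>
    rcases Nat.lt_succ_iff_lt_or_eq.mp h with h | h
    · exact lt_trans (ih h (by omega)) (rv_lt_succ (T := T) hle hcard (by omega))
    · subst h; exact rv_lt_succ (T := T) hle hcard (by omega)

lemma rc_anti (hle : ρ ≤ μ) (hcard : μ.card = ρ.card + 1) {i i' : ℕ} (h : i ≤ i')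
    (h' : i' ≤ rRow μ ρ) : rc μ T ρ i' ≤ rc μ T ρ i := by
  induction i' with
  | zero => obtain rfl := Nat.le_zero.mp h; rfl
  | succ k ih =>
    rcases Nat.le_succ_iff.mp h with h | h
    · exact le_trans (rc_anti_succ (T := T) hle hcard (by omega)) (ih h (by omega))
    · subst h; rfl

lemma rc_top : rc μ T ρ (rRow μ ρ) = rCol0 μ ρ := by
  rw [rc, Nat.sub_self]
  rfl

lemma rv_top : rv μ T ρ (rRow μ ρ) = T (rRow μ ρ) (rCol0 μ ρ) := by
  rw [rv, Nat.sub_self]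
  rfl

/-- The tableau obtained by reverse insertion. -/
noncomputable def revTab (hle : ρ ≤ μ) (hcard : μ.card = ρ.card + 1) :
    SemistandardYoungTableau ρ where
  entry := revEntry μ T ρ
  row_weak' := by
    intro i j1 j2 hj hcell
    unfold revEntry
    have hcell1 : (i, j1) ∈ ρ := ρ.up_left_mem le_rfl hj.le hcell
    rw [if_pos hcell, if_pos hcell1]
    by_cases h2 : i < rRow μ ρ ∧ j2 = rc μ T ρ i
    · rw [if_pos h2, if_neg (by omega)]
      have h3 : T i j1 ≤ T i (rc μ T ρ i) :=
        T.row_weak_of_le (by omega) (hle (h2.2 ▸ hcell))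
      have h4 := rv_eq (T := T) hle hcard h2.1.le
      have h5 := rv_lt_succ (T := T) hle hcard h2.1
      omega
    · rw [if_neg h2]
      by_cases h1 : i < rRow μ ρ ∧ j1 = rc μ T ρ i
      · rw [if_pos h1]
        exact rv_max (T := T) hle hcard h1.1 (h1.2 ▸ hj) hcell
      · rw [if_neg h1]
        exact T.row_weak hj (hle hcell)
  col_strict' := by
    intro i1 i2 j hi hcell
    unfold revEntry
    have hcell1 : (i1, j) ∈ ρ := ρ.up_left_mem hi.le le_rfl hcell
    rw [if_pos hcell, if_pos hcell1]
    by_cases h2 : i2 < rRow μ ρ ∧ j = rc μ T ρ i2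
    · rw [if_pos h2]
      by_cases h1 : i1 < rRow μ ρ ∧ j = rc μ T ρ i1
      · rw [if_pos h1]
        exact rv_lt (T := T) hle hcard (by omega) (by omega)
      · rw [if_neg h1]
        have h3 : T i1 j < T i2 j := T.col_strict hi (hle hcell)
        have h4 := rv_eq (T := T) hle hcard h2.1.le
        have h5 := rv_lt_succ (T := T) hle hcard h2.1
        rw [← h2.2] at h4
        omega
    · rw [if_neg h2]
      by_cases h1 : i1 < rRow μ ρ ∧ j = rc μ T ρ i1
      · rw [if_pos h1]
        -- show i2 < rRow
        have hi2 : i2 < rRow μ ρ := by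
          by_contra hcon
          push_neg at hcon
          have ha : j < ρ.rowLen i2 := YoungDiagram.mem_iff_lt_rowLen.mp hcell
          have hb : ρ.rowLen i2 ≤ ρ.rowLen (rRow μ ρ) := ρ.rowLen_anti _ _ hcon
          have hc : ρ.rowLen (rRow μ ρ) = rCol0 μ ρ := rowLen_corner hle hcard
          have hd : rc μ T ρ (rRow μ ρ) ≤ rc μ T ρ i1 := rc_anti (T := T) hle hcard h1.1.le le_rfl
          rw [rc_top] at hd
          omega
        have hd : rc μ T ρ i2 ≤ rc μ T ρ i1 := rc_anti (T := T) hle hcard hi.le hi2.le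
        have hne : j ≠ rc μ T ρ i2 := fun hcon => h2 ⟨hi2, hcon⟩
        have hmax : rv μ T ρ (i2 + 1) ≤ T i2 j :=
          rv_max (T := T) hle hcard hi2 (by omega) hcell
        have hmono : rv μ T ρ (i1 + 1) < rv μ T ρ (i2 + 1) :=
          rv_lt (T := T) hle hcard (by omega) (by omega)
        omega
      · rw [if_neg h1]
        exact T.col_strict hi (hle hcell)
  zeros' := by
    intro i j hij
    exact if_neg hij

@[simp] lemma revTab_apply (hle : ρ ≤ μ) (hcard : μ.card = ρ.card + 1) (i j : ℕ) :
    revTab (T := T) hle hcard i j = revEntry μ T ρ i j := rfl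

lemma g_zero : g μ T ρ 0 = (T (rRow μ ρ) (rCol0 μ ρ), rCol0 μ ρ) := by
  rw [g]

lemma g_succ (k : ℕ) : g μ T ρ (k + 1) =
    (T (rRow μ ρ - (k + 1))
       (Nat.findGreatest (fun j => (rRow μ ρ - (k + 1), j) ∈ ρ ∧
          T (rRow μ ρ - (k + 1)) j < (g μ T ρ k).1) (ρ.rowLen (rRow μ ρ - (k + 1)))),
     Nat.findGreatest (fun j => (rRow μ ρ - (k + 1), j) ∈ ρ ∧
        T (rRow μ ρ - (k + 1)) j < (g μ T ρ k).1) (ρ.rowLen (rRow μ ρ - (k + 1)))) := by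
  rw [g]

end Reverse

section CompA

variable {μ : YoungDiagram} {T : SemistandardYoungTableau μ} {ρ : YoungDiagram}
variable (hle : ρ ≤ μ) (hcard : μ.card = ρ.card + 1)

lemma fwd_rev_step {i : ℕ} (hi : i < rRow μ ρ)
    (hv : inVal ρ (revTab (T := T) hle hcard) (revX μ T ρ) i = rv μ T ρ i) :
    ∃ hQ : Q ρ (revTab (T := T) hle hcard) i
        (inVal ρ (revTab (T := T) hle hcard) (revX μ T ρ) i),
      insCol ρ (revTab (T := T) hle hcard) (revX μ T ρ) i = rc μ T ρ i ∧
      inVal ρ (revTab (T := T) hle hcard) (revX μ T ρ) (i + 1) = rv μ T ρ (i + 1) := by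
  have hmem := rc_mem (T := T) hle hcard hi
  have hRrc : revTab (T := T) hle hcard i (rc μ T ρ i) = rv μ T ρ (i + 1) := by
    rw [revTab_apply, revEntry, if_pos hmem, if_pos ⟨hi, rfl⟩]
  have hlt : inVal ρ (revTab (T := T) hle hcard) (revX μ T ρ) i
      < revTab (T := T) hle hcard i (rc μ T ρ i) := by
    rw [hv, hRrc]
    exact rv_lt_succ (T := T) hle hcard hi
  have hQ : Q ρ (revTab (T := T) hle hcard) i
      (inVal ρ (revTab (T := T) hle hcard) (revX μ T ρ) i) := ⟨rc μ T ρ i, hmem, hlt⟩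
  have hcol : insCol ρ (revTab (T := T) hle hcard) (revX μ T ρ) i = rc μ T ρ i := by
    rw [insCol_eq_of_q hQ]
    apply le_antisymm (Nat.find_le ⟨hmem, hlt⟩)
    by_contra hcon
    push_neg at hcon
    obtain ⟨hfρ, hflt⟩ := Nat.find_spec hQ
    have hfT : revTab (T := T) hle hcard i (Nat.find hQ) = T i (Nat.find hQ) := by
      rw [revTab_apply, revEntry, if_pos hfρ, if_neg (by rintro ⟨-, h2⟩; omega)]
    rw [hfT] at hflt
    have h3 : T i (Nat.find hQ) ≤ T i (rc μ T ρ i) :=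
      T.row_weak_of_le hcon.le (hle hmem)
    have h4 := rv_eq (T := T) hle hcard hi.le
    omega
  refine ⟨hQ, hcol, ?_⟩
  rw [inVal_succ_of_q hQ, hcol, hRrc]

lemma fwd_rev_val : ∀ i, i ≤ rRow μ ρ →
    inVal ρ (revTab (T := T) hle hcard) (revX μ T ρ) i = rv μ T ρ i := by
  intro i
  induction i with
  | zero => intro _; rw [inVal_zero]; rfl
  | succ i ih =>
    intro hi
    obtain ⟨-, -, h3⟩ := fwd_rev_step (T := T) hle hcard (show i < rRow μ ρ by omega) (ih (by omega))
    exact h3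

lemma fwd_rev_stop : stopRow ρ (revTab (T := T) hle hcard) (revX μ T ρ) = rRow μ ρ := by
  apply stopRow_eq
  · rintro ⟨j, hjρ, hlt⟩
    have hvr := fwd_rev_val (T := T) hle hcard (rRow μ ρ) le_rfl
    rw [hvr, rv_top] at hlt
    have hjq : j < rCol0 μ ρ := by
      rw [← rowLen_corner hle hcard]
      exact YoungDiagram.mem_iff_lt_rowLen.mp hjρ
    have hRT : revTab (T := T) hle hcard (rRow μ ρ) j = T (rRow μ ρ) j := by
      rw [revTab_apply, revEntry, if_pos hjρ, if_neg (by rintro ⟨h, -⟩; omega)]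
    rw [hRT] at hlt
    have := T.row_weak_of_le hjq.le (corner_mem hle hcard).1
    omega
  · intro i hi
    obtain ⟨hQ, -, -⟩ := fwd_rev_step (T := T) hle hcard hi (fwd_rev_val (T := T) hle hcard i hi.le)
    exact hQ

lemma fwd_rev_colstop :
    insCol ρ (revTab (T := T) hle hcard) (revX μ T ρ)
      (stopRow ρ (revTab (T := T) hle hcard) (revX μ T ρ)) = rCol0 μ ρ := by
  rw [insCol_stop, fwd_rev_stop, rowLen_corner hle hcard]

lemma fwd_rev_shape : insShape ρ (revTab (T := T) hle hcard) (revX μ T ρ) = μ := by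
  apply SetLike.ext
  intro c
  obtain ⟨i, j⟩ := c
  rw [mem_insShape]
  have h1 := fwd_rev_stop (T := T) hle hcard
  have h2 := fwd_rev_colstop (T := T) hle hcard
  constructor
  · rintro (h | ⟨h3, h4⟩)
    · exact hle h
    · rw [h2] at h4
      rw [h1] at h3
      rw [h3, h4]
      exact (corner_mem hle hcard).1
  · intro hμ
    by_cases hρm : (i, j) ∈ ρ
    · exact Or.inl hρm
    · right
      have hc : (i, j) = (rRow μ ρ, rCol0 μ ρ) := by
        by_contra hne
        exact hρm ((mem_ρ_iff hle hcard).mpr ⟨hμ, hne⟩)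
      have hci := congrArg Prod.fst hc
      have hcj := congrArg Prod.snd hc
      simp only [] at hci hcj
      exact ⟨by omega, by rw [h2]; omega⟩

lemma fwd_rev_entry (i j : ℕ) :
    insEntry ρ (revTab (T := T) hle hcard) (revX μ T ρ) i j = T i j := by
  have h1 := fwd_rev_stop (T := T) hle hcard
  have h2 := fwd_rev_colstop (T := T) hle hcard
  rw [insEntry]
  by_cases hm : i ≤ stopRow ρ (revTab (T := T) hle hcard) (revX μ T ρ) ∧
      j = insCol ρ (revTab (T := T) hle hcard) (revX μ T ρ) i
  · rw [if_pos hm]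
    obtain ⟨hm1, hm2⟩ := hm
    rcases lt_or_eq_of_le hm1 with h | h
    · have hilt : i < rRow μ ρ := by omega
      obtain ⟨-, hcol, -⟩ := fwd_rev_step (T := T) hle hcard hilt (fwd_rev_val (T := T) hle hcard i hilt.le)
      rw [fwd_rev_val (T := T) hle hcard i hilt.le, rv_eq (T := T) hle hcard hilt.le, hm2, hcol]
    · rw [fwd_rev_val (T := T) hle hcard i (by omega), show i = rRow μ ρ by omega, rv_top]
      congr 1
      rw [hm2, show i = stopRow ρ (revTab (T := T) hle hcard) (revX μ T ρ) from h, h2]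
  · rw [if_neg hm, revTab_apply, revEntry]
    by_cases hρm : (i, j) ∈ ρ
    · rw [if_pos hρm]
      rw [if_neg]
      rintro ⟨ha, hb⟩
      apply hm
      obtain ⟨-, hcol, -⟩ := fwd_rev_step (T := T) hle hcard (show i < rRow μ ρ from ha)
        (fwd_rev_val (T := T) hle hcard i ha.le)
      exact ⟨by omega, by rw [hcol]; exact hb⟩
    · rw [if_neg hρm]
      symm
      apply T.zeros
      intro hμm
      apply hm
      have hc : (i, j) = (rRow μ ρ, rCol0 μ ρ) := by
        by_contra hne
        exact hρm ((mem_ρ_iff hle hcard).mpr ⟨hμm, hne⟩)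
      have hci := congrArg Prod.fst hc
      have hcj := congrArg Prod.snd hc
      simp only [] at hci hcj
      exact ⟨by omega, by rw [hci, ← h1, h2]; exact hcj⟩

lemma fwd_rev_sigma :
    (⟨insShape ρ (revTab (T := T) hle hcard) (revX μ T ρ),
       insTab ρ (revTab (T := T) hle hcard) (revX μ T ρ)⟩
      : Σ ν, SemistandardYoungTableau ν) = ⟨μ, T⟩ :=
  sigma_eq _ _ (fwd_rev_shape hle hcard) (fwd_rev_entry hle hcard)

end CompA

section CompB

variable {ρ : YoungDiagram} {S : SemistandardYoungTableau ρ} {x : ℕ}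

lemma rev_fwd_diff :
    (insShape ρ S x).cells \ ρ.cells
      = {(stopRow ρ S x, insCol ρ S x (stopRow ρ S x))} := by
  ext c
  obtain ⟨i, j⟩ := c
  simp only [Finset.mem_sdiff, Finset.mem_singleton, YoungDiagram.mem_cells]
  constructor
  · rintro ⟨h1, h2⟩
    rcases mem_insShape.mp h1 with h | h
    · exact absurd h h2
    · rw [Prod.mk.injEq]
      exact h
  · rintro h
    rw [Prod.mk.injEq] at h
    obtain ⟨rfl, rfl⟩ := h
    exact ⟨mem_insShape.mpr (Or.inr ⟨rfl, rfl⟩), corner_not_mem⟩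

lemma rev_fwd_rRow : rRow (insShape ρ S x) ρ = stopRow ρ S x := by
  unfold rRow
  rw [rev_fwd_diff, Finset.sup_singleton]

lemma rev_fwd_rCol0 : rCol0 (insShape ρ S x) ρ = insCol ρ S x (stopRow ρ S x) := by
  unfold rCol0
  rw [rev_fwd_diff, Finset.sup_singleton]

lemma rev_fwd_g : ∀ k, k ≤ stopRow ρ S x →
    g (insShape ρ S x) (insTab ρ S x) ρ k
      = (inVal ρ S x (stopRow ρ S x - k), insCol ρ S x (stopRow ρ S x - k)) := by
  intro k
  induction k with
  | zero =>
    intro _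
    rw [g_zero, rev_fwd_rRow, rev_fwd_rCol0, Nat.sub_zero]
    have h0 : insTab ρ S x (stopRow ρ S x) (insCol ρ S x (stopRow ρ S x))
        = inVal ρ S x (stopRow ρ S x) := if_pos ⟨le_rfl, rfl⟩
    rw [h0]
  | succ k ih =>
    intro hk
    have ihk := ih (by omega)
    have hik : stopRow ρ S x - (k + 1) < stopRow ρ S x := by omega
    have hik1 : stopRow ρ S x - (k + 1) + 1 = stopRow ρ S x - k := by omega
    rw [g_succ, rev_fwd_rRow]
    set i := stopRow ρ S x - (k + 1) with hidef
    have hgk1 : (g (insShape ρ S x) (insTab ρ S x) ρ k).1 = inVal ρ S x (i + 1) := by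
      rw [ihk, hik1]
    have hcand : (i, insCol ρ S x i) ∈ ρ ∧
        insTab ρ S x i (insCol ρ S x i)
          < (g (insShape ρ S x) (insTab ρ S x) ρ k).1 := by
      refine ⟨(insCol_spec hik).1, ?_⟩
      rw [hgk1]
      have h5 : insTab ρ S x i (insCol ρ S x i) = inVal ρ S x i := if_pos ⟨hik.le, rfl⟩
      rw [h5]
      exact inVal_lt_succ hik
    have hbound : insCol ρ S x i ≤ ρ.rowLen i := (insCol_lt_rowLen hik).le
    have hfg : Nat.findGreatest (fun j => (i, j) ∈ ρ ∧
        insTab ρ S x i j < (g (insShape ρ S x) (insTab ρ S x) ρ k).1) (ρ.rowLen i)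
        = insCol ρ S x i := by
      apply le_antisymm
      · by_contra hcon
        push_neg at hcon
        have hspec := Nat.findGreatest_spec (P := fun j => (i, j) ∈ ρ ∧
          insTab ρ S x i j < (g (insShape ρ S x) (insTab ρ S x) ρ k).1) hbound hcand
        obtain ⟨hfρ, hflt⟩ := hspec
        set fG := Nat.findGreatest (fun j => (i, j) ∈ ρ ∧
          insTab ρ S x i j < (g (insShape ρ S x) (insTab ρ S x) ρ k).1) (ρ.rowLen i)
        have hfT : insTab ρ S x i fG = S i fG := by
          show insEntry ρ S x i fG = S i fG
          rw [insEntry, if_neg (by rintro ⟨-, h2⟩; omega)]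
        rw [hfT, hgk1] at hflt
        have h6 : S i (insCol ρ S x i) ≤ S i fG :=
          S.row_weak_of_le (by omega) hfρ
        have h7 := inVal_succ hik
        omega
      · exact Nat.le_findGreatest hbound hcand
    rw [hfg]
    have h8 : insTab ρ S x i (insCol ρ S x i) = inVal ρ S x i := if_pos ⟨hik.le, rfl⟩
    rw [h8]

lemma rev_fwd_rv {i : ℕ} (hi : i ≤ stopRow ρ S x) :
    rv (insShape ρ S x) (insTab ρ S x) ρ i = inVal ρ S x i := by
  rw [rv, rev_fwd_rRow, rev_fwd_g (stopRow ρ S x - i) (by omega)]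
  show inVal ρ S x (stopRow ρ S x - (stopRow ρ S x - i)) = inVal ρ S x i
  congr 1
  omega

lemma rev_fwd_rc {i : ℕ} (hi : i ≤ stopRow ρ S x) :
    rc (insShape ρ S x) (insTab ρ S x) ρ i = insCol ρ S x i := by
  rw [rc, rev_fwd_rRow, rev_fwd_g (stopRow ρ S x - i) (by omega)]
  show insCol ρ S x (stopRow ρ S x - (stopRow ρ S x - i)) = insCol ρ S x i
  congr 1
  omega

lemma rev_fwd_x : revX (insShape ρ S x) (insTab ρ S x) ρ = x := by
  rw [revX, rev_fwd_rv (Nat.zero_le _), inVal_zero]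

lemma rev_fwd_entry (i j : ℕ) :
    revEntry (insShape ρ S x) (insTab ρ S x) ρ i j = S i j := by
  rw [revEntry]
  by_cases hρm : (i, j) ∈ ρ
  · rw [if_pos hρm]
    by_cases hm : i < rRow (insShape ρ S x) ρ ∧ j = rc (insShape ρ S x) (insTab ρ S x) ρ i
    · rw [if_pos hm]
      obtain ⟨hm1, hm2⟩ := hm
      rw [rev_fwd_rRow] at hm1
      rw [rev_fwd_rc hm1.le] at hm2
      rw [rev_fwd_rv (by omega), inVal_succ hm1, hm2]
    · rw [if_neg hm]
      show insEntry ρ S x i j = S i j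
      rw [insEntry, if_neg]
      rintro ⟨ha, hb⟩
      rcases lt_or_eq_of_le ha with h | h
      · exact hm ⟨by rw [rev_fwd_rRow]; exact h, by rw [rev_fwd_rc h.le]; exact hb⟩
      · have h9 := YoungDiagram.mem_iff_lt_rowLen.mp hρm
        rw [h, insCol_stop] at hb
        rw [h] at h9
        omega
  · rw [if_neg hρm]
    exact (S.zeros hρm).symm

end CompB

end RSKIns

lemma getD_decAt_self {lam : List ℕ} {x : ℕ} (h : x < lam.length) :
    (decAt lam x).getD x 0 = lam.getD x 0 - 1 := by
  unfold decAt
  rw [List.getD_eq_getElem?_getD, List.getElem?_set_eq_of_lt _ h]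
  rfl

lemma getD_decAt_ne {lam : List ℕ} {x v : ℕ} (h : x ≠ v) :
    (decAt lam x).getD v 0 = lam.getD v 0 := by
  unfold decAt
  rw [List.getD_eq_getElem?_getD, List.getElem?_set_ne h, ← List.getD_eq_getElem?_getD]

/-- **The cardinality identity underlying the insertion bijection.**  For partitions
`ρ ⊢ n - 1` and `lam ⊢ n`, the number of pairs `(μ, T)` with `μ ⊢ n`, `ρ ⪯ μ` and
`T ∈ SSYT(μ, lam)` equals the number of pairs `(x, S)` with `x < length lam`,
`λ_x ≥ 1` and `S ∈ SSYT(ρ, λ^{(x)})`.  (Indices are 0-based.) -/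
theorem card_pairs_eq (n : ℕ) (lam : List ℕ) (ρ : YoungDiagram)
    (hlam : IsPartitionList lam) (hn : lam.sum = n) (hρ : ρ.card + 1 = n) :
    Nat.card {p : Σ μ : YoungDiagram, SemistandardYoungTableau μ //
        p.1.card = n ∧ ρ ≤ p.1 ∧ HasContent p.2 lam} =
      Nat.card {q : ℕ × SemistandardYoungTableau ρ //
        q.1 < lam.length ∧ 0 < lam.getD q.1 0 ∧ HasContent q.2 (decAt lam q.1)} := by
  classical
  symm
  apply Nat.card_congr
  have hΦcard : ∀ (x : ℕ) (S : SemistandardYoungTableau ρ),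
      (RSKIns.insShape ρ S x).card = n := by
    intro x S
    rw [RSKIns.card_insShape]
    omega
  have hΦcontent : ∀ (x : ℕ) (S : SemistandardYoungTableau ρ),
      x < lam.length → 0 < lam.getD x 0 → HasContent S (decAt lam x) →
      HasContent (RSKIns.insTab ρ S x) lam := by
    intro x S h1 h2 h3 v
    have h4 := RSKIns.insTab_content (ρ := ρ) (S := S) (x := x) v
    show contentCount (RSKIns.insShape ρ S x) (RSKIns.insTab ρ S x) v = lam.getD v 0
    rw [h4, h3 v]
    by_cases hv : x = v
    · subst hv
      rw [getD_decAt_self h1, if_pos rfl]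
      omega
    · rw [getD_decAt_ne hv, if_neg hv]
      omega
  set Φ : {q : ℕ × SemistandardYoungTableau ρ // q.1 < lam.length ∧ 0 < lam.getD q.1 0 ∧
        HasContent q.2 (decAt lam q.1)} →
      {p : Σ μ : YoungDiagram, SemistandardYoungTableau μ //
        p.1.card = n ∧ ρ ≤ p.1 ∧ HasContent p.2 lam} :=
    fun q => ⟨⟨RSKIns.insShape ρ q.1.2 q.1.1, RSKIns.insTab ρ q.1.2 q.1.1⟩,
      hΦcard q.1.1 q.1.2, RSKIns.le_insShape, hΦcontent q.1.1 q.1.2 q.2.1 q.2.2.1 q.2.2.2⟩ with hΦdef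
  apply Equiv.ofBijective Φ
  constructor
  · -- injective
    rintro ⟨⟨x₁, S₁⟩, hq1⟩ ⟨⟨x₂, S₂⟩, hq2⟩ h
    have hval : (⟨RSKIns.insShape ρ S₁ x₁, RSKIns.insTab ρ S₁ x₁⟩
          : Σ ν, SemistandardYoungTableau ν)
        = ⟨RSKIns.insShape ρ S₂ x₂, RSKIns.insTab ρ S₂ x₂⟩ :=
      congrArg Subtype.val h
    have e1 := congrArg (fun p : (Σ ν, SemistandardYoungTableau ν) => RSKIns.revX p.1 p.2 ρ) hval
    simp only [] at e1
    rw [RSKIns.rev_fwd_x, RSKIns.rev_fwd_x] at e1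
    have e2 : ∀ i j, S₁ i j = S₂ i j := by
      intro i j
      have e3 := congrArg
        (fun p : (Σ ν, SemistandardYoungTableau ν) => RSKIns.revEntry p.1 p.2 ρ i j) hval
      simp only [] at e3
      rw [RSKIns.rev_fwd_entry, RSKIns.rev_fwd_entry] at e3
      exact e3
    apply Subtype.ext
    show (x₁, S₁) = (x₂, S₂)
    rw [Prod.mk.injEq]
    exact ⟨e1, SemistandardYoungTableau.ext e2⟩
  · -- surjective
    rintro ⟨⟨μ, T⟩, h1, h2, h3⟩
    have h1' : μ.card = n := h1
    have h2' : ρ ≤ μ := h2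
    have h3' : HasContent T lam := h3
    have hcard : μ.card = ρ.card + 1 := by omega
    set x₀ := RSKIns.revX μ T ρ with hx₀
    set R := RSKIns.revTab (T := T) h2' hcard with hR
    have hsig := RSKIns.fwd_rev_sigma (T := T) h2' hcard
    have hcc : ∀ v, contentCount μ T v
        = contentCount ρ R v + (if x₀ = v then 1 else 0) := by
      intro v
      have h4 := RSKIns.insTab_content (ρ := ρ) (S := R) (x := x₀) v
      have h5 := congrArg
        (fun p : (Σ ν, SemistandardYoungTableau ν) => contentCount p.1 p.2 v) hsig
      simp only [] at h5
      rw [← h5, h4]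
    have hx0pos : 0 < lam.getD x₀ 0 := by
      have h6 := h3' x₀
      have h7 := hcc x₀
      rw [if_pos rfl] at h7
      omega
    have hx0len : x₀ < lam.length := by
      by_contra hc
      push_neg at hc
      have : lam.getD x₀ 0 = 0 := by
        rw [List.getD_eq_getElem?_getD, List.getElem?_eq_none hc]
        rfl
      omega
    have hRcontent : HasContent R (decAt lam x₀) := by
      intro v
      have h6 := hcc v
      have h7 := h3' v
      by_cases hv : x₀ = v
      · subst hv
        rw [if_pos rfl] at h6
        rw [getD_decAt_self hx0len]
        omega
      · rw [if_neg hv] at h6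
        rw [getD_decAt_ne hv]
        omega
    refine ⟨⟨(x₀, R), hx0len, hx0pos, hRcontent⟩, ?_⟩
    apply Subtype.ext
    exact hsig
end
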